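/- Let (X, μ) be a probability space, let (ψ_n)_{n∈ℕ} be a sequence of measurable functions ψ_n : X → ℝ, let ε > 0, and let α < β be real numbers. Then there exists a Borel set S ⊆ [α, β] of full Lebesgue measure in [α, β] such that for every s ∈ S there exists a measurable function γ : X → (0, 1] with the property that for μ-almost every x ∈ X and every n ∈ ℕ, |ψ_n(x) − s| ≥ γ(x) · e^{−nε}. -/

import Mathlib

open MeasureTheory Filter

/-- Borel–Cantelli content of Dupont's lemma: for Lebesgue-almost every
`s ∈ [α, β]`, the sequence `ψ n x` approaches `s` at most at exponentially small
speed `γ(x) e^{-nε}`, for `μ`-almost every `x`. -/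
theorem slow_approach_of_almost_every_radius {X : Type*} [MeasurableSpace X]
    (μ : Measure X) [IsProbabilityMeasure μ]
    (ψ : ℕ → X → ℝ) (hψ : ∀ n, Measurable (ψ n))
    (ε : ℝ) (hε : 0 < ε) (α β : ℝ) (hαβ : α < β) :
    ∃ S : Set ℝ, MeasurableSet S ∧ S ⊆ Set.Icc α β ∧
      volume (Set.Icc α β \ S) = 0 ∧
      ∀ s ∈ S, ∃ γ : X → ℝ, Measurable γ ∧ (∀ x, γ x ∈ Set.Ioc (0 : ℝ) 1) ∧
        ∀ᵐ x ∂μ, ∀ n : ℕ, |ψ n x - s| ≥ γ x * Real.exp (-(n : ℝ) * ε) := by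
  classical
  set r : ℕ → ℝ := fun n => Real.exp (-(n : ℝ) * (ε / 2)) with hr
  set ν := volume.restrict (Set.Icc α β) with hν
  -- product-measurable sets
  have hAmeas : ∀ n, MeasurableSet {p : ℝ × X | |ψ n p.2 - p.1| < r n} := fun n =>
    measurableSet_lt (((hψ n).comp measurable_snd).sub measurable_fst).abs measurable_const
  have hBmeas : ∀ n, MeasurableSet {p : ℝ × X | ψ n p.2 = p.1} := fun n =>
    measurableSet_eq_fun ((hψ n).comp measurable_snd) measurable_fst
  set f : ℕ → ℝ → ENNReal := fun n s => μ {x | |ψ n x - s| < r n} with hf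
  set g : ℕ → ℝ → ENNReal := fun n s => μ {x | ψ n x = s} with hg
  have hfmeas : ∀ n, Measurable (f n) := by
    intro n
    exact measurable_measure_prodMk_left (hAmeas n)
  have hgmeas : ∀ n, Measurable (g n) := by
    intro n
    exact measurable_measure_prodMk_left (hBmeas n)
  -- Fubini bound for f
  have hfint : ∀ n, ∫⁻ s, f n s ∂ν ≤ ENNReal.ofReal (2 * r n) := by
    intro n
    have h1 : ∫⁻ s, f n s ∂ν = (ν.prod μ) {p : ℝ × X | |ψ n p.2 - p.1| < r n} := by
      rw [Measure.prod_apply (hAmeas n)]; rfl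
    have h2 : (ν.prod μ) {p : ℝ × X | |ψ n p.2 - p.1| < r n}
        = ∫⁻ x, ν {s : ℝ | |ψ n x - s| < r n} ∂μ := by
      rw [Measure.prod_apply_symm (hAmeas n)]; rfl
    rw [h1, h2]
    have hb : ∀ x : X, ν {s : ℝ | |ψ n x - s| < r n} ≤ ENNReal.ofReal (2 * r n) := by
      intro x
      have hsub : {s : ℝ | |ψ n x - s| < r n} = Set.Ioo (ψ n x - r n) (ψ n x + r n) := by
        ext s
        simp only [Set.mem_setOf_eq, Set.mem_Ioo, abs_sub_lt_iff]
        constructor <;> intro h <;> constructor <;> linarith [h.1, h.2]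
      calc ν {s : ℝ | |ψ n x - s| < r n} ≤ volume {s : ℝ | |ψ n x - s| < r n} :=
            Measure.restrict_le_self _
        _ = ENNReal.ofReal (2 * r n) := by
            rw [hsub, Real.volume_Ioo]; ring_nf
    calc ∫⁻ x, ν {s : ℝ | |ψ n x - s| < r n} ∂μ
        ≤ ∫⁻ _, ENNReal.ofReal (2 * r n) ∂μ := lintegral_mono hb
      _ = ENNReal.ofReal (2 * r n) := by simp
  -- total finiteness
  have hgeom : (∑' n, ENNReal.ofReal (2 * r n)) ≠ ⊤ := by
    have hq : ENNReal.ofReal (Real.exp (-(ε / 2))) < 1 := by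
      rw [← ENNReal.ofReal_one]
      exact ENNReal.ofReal_lt_ofReal_iff_of_nonneg (Real.exp_pos _).le |>.2
        (Real.exp_lt_one_iff.2 (by linarith))
    have hrn : ∀ n : ℕ, ENNReal.ofReal (2 * r n)
        = ENNReal.ofReal 2 * ENNReal.ofReal (Real.exp (-(ε / 2))) ^ n := by
      intro n
      have hre : (2 : ℝ) * r n = 2 * Real.exp (-(ε / 2)) ^ n := by
        have h : -(n : ℝ) * (ε / 2) = (n : ℝ) * (-(ε / 2)) := by ring
        simp only [hr, h, Real.exp_nat_mul]
      rw [hre, ENNReal.ofReal_mul (by norm_num), ENNReal.ofReal_pow (Real.exp_pos _).le]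
    simp_rw [hrn]
    rw [ENNReal.tsum_mul_left, ENNReal.tsum_geometric]
    exact ENNReal.mul_ne_top ENNReal.ofReal_ne_top
      (ENNReal.inv_ne_top.2 (by simpa [tsub_eq_zero_iff_le] using hq.not_ge))
  have hFfin : ∀ᵐ s ∂ν, (∑' n, f n s) ≠ ⊤ := by
    have hm : Measurable fun s => ∑' n, f n s := Measurable.ennreal_tsum hfmeas
    have hint : ∫⁻ s, (∑' n, f n s) ∂ν ≠ ⊤ := by
      rw [lintegral_tsum fun n => (hfmeas n).aemeasurable]
      exact ne_top_of_le_ne_top hgeom (ENNReal.tsum_le_tsum hfint)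
    exact (ae_lt_top hm hint).mono fun s hs => hs.ne
  -- a.e. s, each level set has measure zero
  have hGzero : ∀ n, ∀ᵐ s ∂ν, g n s = 0 := by
    intro n
    have h1 : ∫⁻ s, g n s ∂ν = (ν.prod μ) {p : ℝ × X | ψ n p.2 = p.1} := by
      rw [Measure.prod_apply (hBmeas n)]; rfl
    have h2 : (ν.prod μ) {p : ℝ × X | ψ n p.2 = p.1}
        = ∫⁻ x, ν {s : ℝ | ψ n x = s} ∂μ := by
      rw [Measure.prod_apply_symm (hBmeas n)]; rfl
    have h3 : ∫⁻ s, g n s ∂ν = 0 := by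
      rw [h1, h2]
      have : ∀ x : X, ν {s : ℝ | ψ n x = s} = 0 := by
        intro x
        have hsub : {s : ℝ | ψ n x = s} = {ψ n x} := by
          ext s; simp [eq_comm]
        refine le_antisymm ?_ bot_le
        calc ν {s : ℝ | ψ n x = s} ≤ volume {s : ℝ | ψ n x = s} := Measure.restrict_le_self _
          _ = 0 := by rw [hsub]; exact Real.volume_singleton
      simp [this]
    exact (lintegral_eq_zero_iff (hgmeas n)).mp h3
  -- the good set
  set S : Set ℝ := Set.Icc α β ∩ ({s | (∑' n, f n s) ≠ ⊤} ∩ ⋂ n, {s | g n s = 0}) with hS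
  have hSmeas : MeasurableSet S := by
    refine measurableSet_Icc.inter (MeasurableSet.inter ?_ (MeasurableSet.iInter fun n => ?_))
    · exact (Measurable.ennreal_tsum hfmeas (measurableSet_singleton ⊤)).compl
    · exact hgmeas n (measurableSet_singleton 0)
  refine ⟨S, hSmeas, Set.inter_subset_left, ?_, ?_⟩
  · -- null complement in Icc
    have hae : ∀ᵐ s ∂ν, s ∈ {s | (∑' n, f n s) ≠ ⊤} ∩ ⋂ n, {s | g n s = 0} := by
      filter_upwards [hFfin, ae_all_iff.2 hGzero] with s h1 h2
      exact ⟨h1, Set.mem_iInter.2 h2⟩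
    have : ν ({s | (∑' n, f n s) ≠ ⊤} ∩ ⋂ n, {s | g n s = 0})ᶜ = 0 := hae
    have hsub : Set.Icc α β \ S ⊆
        ({s | (∑' n, f n s) ≠ ⊤} ∩ ⋂ n, {s | g n s = 0})ᶜ ∩ Set.Icc α β := by
      intro s hs
      exact ⟨fun hmem => hs.2 ⟨hs.1, hmem⟩, hs.1⟩
    refine le_antisymm ?_ zero_le
    calc volume (Set.Icc α β \ S)
        ≤ volume (({s | (∑' n, f n s) ≠ ⊤} ∩ ⋂ n, {s | g n s = 0})ᶜ ∩ Set.Icc α β) :=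
          measure_mono hsub
      _ = ν ({s | (∑' n, f n s) ≠ ⊤} ∩ ⋂ n, {s | g n s = 0})ᶜ :=
          (Measure.restrict_apply' measurableSet_Icc).symm
      _ = 0 := this
  · -- the main conclusion for each s ∈ S
    intro s hs
    obtain ⟨hsIcc, hsum, hzero⟩ := hs
    have hzero' : ∀ n, μ {x | ψ n x = s} = 0 := fun n => Set.mem_iInter.1 hzero n
    -- Borel–Cantelli
    have hBC : ∀ᵐ x ∂μ, ∀ᶠ n in atTop, x ∉ {x | |ψ n x - s| < r n} :=
      ae_eventually_notMem hsum
    have hne : ∀ᵐ x ∂μ, ∀ n, ψ n x ≠ s := by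
      rw [ae_all_iff]
      intro n
      exact (measure_eq_zero_iff_ae_notMem.1 (hzero' n)).mono fun x hx => hx
    -- the function γ
    set G : X → ENNReal := fun x =>
      ⨅ n, ENNReal.ofReal (min 1 (|ψ n x - s| * Real.exp ((n : ℝ) * ε))) with hG
    have hGmeas : Measurable G := by
      refine Measurable.iInf fun n => ENNReal.measurable_ofReal.comp ?_
      exact (measurable_const.min (((hψ n).sub measurable_const).abs.mul measurable_const))
    have hGle1 : ∀ x, G x ≤ 1 := by
      intro x
      refine le_trans (iInf_le _ 0) ?_
      rw [← ENNReal.ofReal_one]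
      exact ENNReal.ofReal_le_ofReal (min_le_left _ _)
    set γ : X → ℝ := fun x => if G x = 0 then 1 else (G x).toReal with hγ
    have hγmeas : Measurable γ := by
      refine Measurable.ite (hGmeas (measurableSet_singleton 0)) measurable_const ?_
      exact hGmeas.ennreal_toReal
    have hγIoc : ∀ x, γ x ∈ Set.Ioc (0 : ℝ) 1 := by
      intro x
      by_cases h : G x = 0
      · simp [hγ, h]
      · simp only [hγ, h, if_false]
        constructor
        · exact ENNReal.toReal_pos h (lt_of_le_of_lt (hGle1 x) ENNReal.one_lt_top).ne
        · exact ENNReal.toReal_le_of_le_ofReal zero_le_one (by simpa using hGle1 x)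
    refine ⟨γ, hγmeas, hγIoc, ?_⟩
    filter_upwards [hBC, hne] with x hx1 hx2
    intro n
    -- exponent terms
    set a : ℕ → ℝ := fun k => min 1 (|ψ k x - s| * Real.exp ((k : ℝ) * ε)) with ha
    have hapos : ∀ k, 0 < a k := by
      intro k
      refine lt_min one_pos (mul_pos (abs_pos.2 (sub_ne_zero.2 (hx2 k))) (Real.exp_pos _))
    obtain ⟨N, hN⟩ := (eventually_atTop).1 hx1
    have haN : ∀ k, N ≤ k → a k = 1 := by
      intro k hk
      have hge : r k ≤ |ψ k x - s| := not_lt.1 (hN k hk)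
      have h1 : (1 : ℝ) ≤ |ψ k x - s| * Real.exp ((k : ℝ) * ε) := by
        have he : r k * Real.exp ((k : ℝ) * ε) = Real.exp ((k : ℝ) * (ε / 2)) := by
          rw [hr, ← Real.exp_add]; ring_nf
        have h2 : Real.exp ((k : ℝ) * (ε / 2)) ≥ 1 := by
          rw [ge_iff_le, ← Real.exp_zero]
          exact Real.exp_le_exp.2 (by positivity)
        calc (1 : ℝ) ≤ Real.exp ((k : ℝ) * (ε / 2)) := h2
          _ = r k * Real.exp ((k : ℝ) * ε) := he.symm
          _ ≤ |ψ k x - s| * Real.exp ((k : ℝ) * ε) :=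
            mul_le_mul_of_nonneg_right hge (Real.exp_pos _).le
      exact min_eq_left h1
    -- uniform lower bound on a
    set c : ℝ := (Finset.range (N + 1)).inf' (by simp) a with hc
    have hcpos : 0 < c := by
      rw [hc]
      exact (Finset.lt_inf'_iff _).2 fun k _ => hapos k
    have hcle : ∀ k, c ≤ a k := by
      intro k
      by_cases hk : k ≤ N
      · exact Finset.inf'_le a (Finset.mem_range.2 (Nat.lt_succ_of_le hk))
      · have h1 : c ≤ a N := Finset.inf'_le a (Finset.mem_range.2 (Nat.lt_succ_self N))
        rw [haN N le_rfl] at h1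
        rw [haN k (le_of_not_ge hk)]
        exact h1
    have hGpos : G x ≠ 0 := by
      have : ENNReal.ofReal c ≤ G x :=
        le_iInf fun k => ENNReal.ofReal_le_ofReal (hcle k)
      exact fun h => absurd (h ▸ this) (by simpa [ENNReal.ofReal_eq_zero, not_le] using hcpos)
    have hγx : γ x = (G x).toReal := by simp [hγ, hGpos]
    have hγle : γ x ≤ a n := by
      rw [hγx]
      exact ENNReal.toReal_le_of_le_ofReal (hapos n).le (iInf_le _ n)
    have h2 : γ x ≤ |ψ n x - s| * Real.exp ((n : ℝ) * ε) :=
      le_trans hγle (min_le_right _ _)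
    have h3 := mul_le_mul_of_nonneg_right h2 (Real.exp_pos (-(n : ℝ) * ε)).le
    have h4 : Real.exp ((n : ℝ) * ε) * Real.exp (-(n : ℝ) * ε) = 1 := by
      rw [← Real.exp_add]; ring_nf; exact Real.exp_zero
    calc γ x * Real.exp (-(n : ℝ) * ε)
        ≤ |ψ n x - s| * Real.exp ((n : ℝ) * ε) * Real.exp (-(n : ℝ) * ε) := h3
      _ = |ψ n x - s| := by rw [mul_assoc, h4, mul_one]
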